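/- Let Φ be an irreducible crystallographic root system, S ⊆ Π, β ∈ Φ⁺ with supp(β) ∩ S ≠ ∅. Then max Φ_{S,β} and −min Φ_{S,β} are both (Π\S)-dominant, i.e., (max Φ_{S,β}, α) ≥ 0 and (−min Φ_{S,β}, α) ≥ 0 for all α ∈ Π \ S. -/

import Mathlib

open scoped RealInnerProductSpace
attribute [local instance] Classical.propDecidable

variable {E : Type*} [NormedAddCommGroup E] [InnerProductSpace ℝ E] [FiniteDimensional ℝ E]

/-- A finite reduced crystallographic root system spanning `E`. -/
structure IsRootSystem (Φ : Finset E) : Prop where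
  nonzero : ∀ γ ∈ Φ, γ ≠ (0 : E)
  span_top : Submodule.span ℝ (Φ : Set E) = ⊤
  reduced : ∀ γ ∈ Φ, ∀ t : ℝ, t • γ ∈ Φ → t = 1 ∨ t = -1
  reflect : ∀ γ ∈ Φ, ∀ δ ∈ Φ, δ - (2 * ⟪δ, γ⟫ / ⟪γ, γ⟫) • γ ∈ Φ
  cry : ∀ γ ∈ Φ, ∀ δ ∈ Φ, ∃ n : ℤ, 2 * ⟪δ, γ⟫ / ⟪γ, γ⟫ = (n : ℝ)

/-- `Δ` is a simple system (base) for `Φ`, and `c γ a` is the coordinate of `γ`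
on the simple root `a`. -/
structure IsBase (Φ Δ : Finset E) (c : E → E → ℝ) : Prop where
  subset : Δ ⊆ Φ
  indep : LinearIndependent ℝ (fun x : (Δ : Set E) => (x : E))
  repr : ∀ γ ∈ Φ, γ = ∑ a ∈ Δ, c γ a • a
  int : ∀ γ ∈ Φ, ∀ a ∈ Δ, ∃ n : ℤ, c γ a = (n : ℝ)
  sign : ∀ γ ∈ Φ, (∀ a ∈ Δ, 0 ≤ c γ a) ∨ (∀ a ∈ Δ, c γ a ≤ 0)

/-- Irreducibility: no splitting into two nonempty mutually orthogonal parts. -/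
def IsIrredSys (Φ : Finset E) : Prop :=
  ∀ s : Set E, s ⊆ (Φ : Set E) → (∀ x ∈ s, ∀ y ∈ (Φ : Set E) \ s, ⟪x, y⟫ = 0) →
    s = ∅ ∨ s = (Φ : Set E)

/-- `Φ_{S,β}`: roots whose coordinates on every simple root of `S` agree with those of `β`. -/
def lev (Φ : Finset E) (c : E → E → ℝ) (S : Finset E) (β : E) : Set E :=
  {γ | γ ∈ Φ ∧ ∀ a ∈ S, c γ a = c β a}

/-- The root-poset order: `x ≤ y` iff `y - x` is a nonnegative linear combination of
positive roots. -/
def rootLe (Φ Δ : Finset E) (c : E → E → ℝ) (x y : E) : Prop :=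
  ∃ f : E → ℝ, (∀ γ, 0 ≤ f γ) ∧
    y - x = ∑ γ ∈ Φ.filter (fun γ => ∀ a ∈ Δ, 0 ≤ c γ a), f γ • γ

/-- `max Φ_{S,β}` and `-min Φ_{S,β}` are `(Π \ S)`-dominant. -/
theorem stmt8 (Φ Δ : Finset E) (c : E → E → ℝ)
    (hΦ : IsRootSystem Φ) (hB : IsBase Φ Δ c) (hirr : IsIrredSys Φ)
    (S : Finset E) (hS : S ⊆ Δ) (β : E) (hβ : β ∈ Φ)
    (hβpos : ∀ a ∈ Δ, 0 ≤ c β a) (hsupp : ∃ a ∈ S, c β a ≠ 0)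
    (m M : E)
    (hm : m ∈ lev Φ c S β ∧ ∀ γ ∈ lev Φ c S β, rootLe Φ Δ c m γ)
    (hM : M ∈ lev Φ c S β ∧ ∀ γ ∈ lev Φ c S β, rootLe Φ Δ c γ M) :
    ∀ a ∈ Δ, a ∉ S → 0 ≤ ⟪M, a⟫ ∧ 0 ≤ ⟪-m, a⟫ := by
  classical
  -- dual functionals to the simple roots
  obtain ⟨lam, hlam1, hlam0⟩ : ∃ lam : E → E →ₗ[ℝ] ℝ,
      (∀ a ∈ Δ, lam a a = 1) ∧ (∀ a ∈ Δ, ∀ b ∈ Δ, a ≠ b → lam a b = 0) := by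
    have hi : LinearIndepOn ℝ id (Δ : Set E) := hB.indep
    let B := Module.Basis.extend hi
    refine ⟨fun a => if h : a ∈ Δ then B.coord ⟨a, hi.subset_extend _ h⟩ else 0, ?_, ?_⟩
    · intro a ha
      simp only [dif_pos ha]
      have h1 : (B ⟨a, hi.subset_extend _ ha⟩ : E) = a := Module.Basis.extend_apply_self hi _
      have h2 : B.coord ⟨a, hi.subset_extend _ ha⟩ (B ⟨a, hi.subset_extend _ ha⟩) = 1 := by
        rw [Module.Basis.coord_apply, Module.Basis.repr_self, Finsupp.single_eq_same]
      rw [h1] at h2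
      exact h2
    · intro a ha b hb hab
      simp only [dif_pos ha]
      have h1 : (B ⟨b, hi.subset_extend _ hb⟩ : E) = b := Module.Basis.extend_apply_self hi _
      have h2 : B.coord ⟨a, hi.subset_extend _ ha⟩ (B ⟨b, hi.subset_extend _ hb⟩) = 0 := by
        rw [Module.Basis.coord_apply, Module.Basis.repr_self, Finsupp.single_apply, if_neg]
        intro h
        exact hab (congrArg Subtype.val h).symm
      rw [h1] at h2
      exact h2
  -- lam a computes the coordinate c · a on roots
  have hlamc : ∀ a ∈ Δ, ∀ γ ∈ Φ, lam a γ = c γ a := by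
    intro a ha γ hγ
    calc lam a γ = lam a (∑ b ∈ Δ, c γ b • b) := by rw [← hB.repr γ hγ]
      _ = ∑ b ∈ Δ, c γ b * lam a b := by
          rw [map_sum]; exact Finset.sum_congr rfl fun b _ => by rw [map_smul]; rfl
      _ = c γ a := by
          rw [Finset.sum_eq_single a]
          · rw [hlam1 a ha, mul_one]
          · intro b hb hba
            rw [hlam0 a ha b hb (fun h => hba h.symm), mul_zero]
          · intro h; exact absurd ha h
  -- key positivity: if t • a is a nonneg combination of positive roots, then 0 ≤ t
  have hkey : ∀ a ∈ Δ, ∀ t : ℝ, ∀ f : E → ℝ, (∀ γ, 0 ≤ f γ) →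
      t • a = ∑ γ ∈ Φ.filter (fun γ => ∀ b ∈ Δ, 0 ≤ c γ b), f γ • γ → 0 ≤ t := by
    intro a ha t f hf hsum
    have h2 := congrArg (lam a) hsum
    rw [map_smul, map_sum] at h2
    simp only [smul_eq_mul, hlam1 a ha, mul_one] at h2
    rw [h2]
    apply Finset.sum_nonneg
    intro γ hγ
    rw [Finset.mem_filter] at hγ
    rw [map_smul, smul_eq_mul, hlamc a ha γ hγ.1]
    exact mul_nonneg (hf γ) (hγ.2 a ha)
  -- subtracting a multiple of a ∉ S keeps a root in the level set
  have hlev : ∀ a ∈ Δ, a ∉ S → ∀ x ∈ lev Φ c S β, ∀ t : ℝ,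
      x - t • a ∈ Φ → x - t • a ∈ lev Φ c S β := by
    intro a ha haS x hx t hmem
    refine ⟨hmem, fun b hb => ?_⟩
    have hbΔ := hS hb
    have hba : b ≠ a := fun h => haS (h ▸ hb)
    have := hlamc b hbΔ _ hmem
    rw [map_sub, map_smul, smul_eq_mul, hlam0 b hbΔ a ha hba, mul_zero, sub_zero,
      hlamc b hbΔ x hx.1] at this
    rw [← this]
    exact hx.2 b hb
  intro a ha haS
  have haΦ := hB.subset ha
  have haa : (0:ℝ) < ⟪a, a⟫ := by
    rw [real_inner_self_eq_norm_sq]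
    exact pow_pos (norm_pos_iff.mpr (hΦ.nonzero a haΦ)) 2
  constructor
  · by_contra h
    push_neg at h
    set n : ℝ := 2 * ⟪M, a⟫ / ⟪a, a⟫ with hn
    have hnneg : n < 0 := div_neg_of_neg_of_pos (by linarith) haa
    have hrefl : M - n • a ∈ Φ := hΦ.reflect a haΦ M hM.1.1
    have hlev' : M - n • a ∈ lev Φ c S β := hlev a ha haS M hM.1 n hrefl
    obtain ⟨f, hf, hsum⟩ := hM.2 _ hlev'
    have hdiff : M - (M - n • a) = n • a := by abel
    rw [hdiff] at hsum
    exact absurd (hkey a ha n f hf hsum) (not_le.mpr hnneg)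
  · by_contra h
    push_neg at h
    rw [inner_neg_left] at h
    have hma : (0:ℝ) < ⟪m, a⟫ := by linarith
    set n : ℝ := 2 * ⟪m, a⟫ / ⟪a, a⟫ with hn
    have hnpos : 0 < n := div_pos (by linarith) haa
    have hrefl : m - n • a ∈ Φ := hΦ.reflect a haΦ m hm.1.1
    have hlev' : m - n • a ∈ lev Φ c S β := hlev a ha haS m hm.1 n hrefl
    obtain ⟨f, hf, hsum⟩ := hm.2 _ hlev'
    have hdiff : m - n • a - m = (-n) • a := by
      rw [neg_smul]; abel
    rw [hdiff] at hsum
    exact absurd (hkey a ha (-n) f hf hsum) (not_le.mpr (neg_neg_of_pos hnpos))
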